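/- arXiv:2307.16329 — 4 statements merged into one kernel-verified Lean document; each statement's English description precedes it below -/
import Mathlib

section
/- Let ρ ∈ P(G) with γ_Poincaré(ρ) > 0 and f ∈ ℝⁿ with Σᵢ fᵢ = 0. Then there exists φ ∈ ℝⁿ with f = −div_ρ(∇_G φ). Moreover, for any skew-symmetric v with f = −div_ρ(v), one has ‖∇_G φ‖²_ρ ≤ ‖v‖²_ρ. -/
open Finset MeasureTheory

/-- The probability simplex `P(G)`. -/
def IsProb {n : ℕ} (ρ : Fin n → ℝ) : Prop := (∀ i, 0 ≤ ρ i) ∧ ∑ i, ρ i = 1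

/-- Skew-symmetric matrices `𝕊^{n×n}`. -/
def Skew {n : ℕ} (v : Fin n → Fin n → ℝ) : Prop := ∀ i j, v i j = - v j i

/-- The weighted inner product `(v,w)_ρ = (1/2) ∑_{(i,j)∈E} g(ρ_i,ρ_j) v_{ij} w_{ij}`. -/
noncomputable def gInner {n : ℕ} (ω : Fin n → Fin n → ℝ) (g : ℝ → ℝ → ℝ)
    (ρ : Fin n → ℝ) (v w : Fin n → Fin n → ℝ) : ℝ :=
  (1/2) * ∑ i, ∑ j, (if ω i j ≠ 0 then g (ρ i) (ρ j) * v i j * w i j else 0)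

/-- The graph gradient `(∇_G φ)_{ij} = √ω_{ij} (φ_i - φ_j)`. -/
noncomputable def gradG {n : ℕ} (ω : Fin n → Fin n → ℝ) (φ : Fin n → ℝ) :
    Fin n → Fin n → ℝ :=
  fun i j => Real.sqrt (ω i j) * (φ i - φ j)

/-- The graph divergence `⟨div_ρ(v)⟩_i = ∑_{j∈N(i)} √ω_{ij} g(ρ_i,ρ_j) v_{ji}`. -/
noncomputable def gdiv {n : ℕ} (ω : Fin n → Fin n → ℝ) (g : ℝ → ℝ → ℝ)
    (ρ : Fin n → ℝ) (v : Fin n → Fin n → ℝ) : Fin n → ℝ :=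
  fun i => ∑ j, Real.sqrt (ω i j) * g (ρ i) (ρ j) * v j i

/-- The euclidean pairing on `ℝ^n`. -/
def dotl2 {n : ℕ} (a b : Fin n → ℝ) : ℝ := ∑ i, a i * b i

/-- The Poincaré constant
`γ(ρ) = inf { (1/2)∑_{(i,j)∈E} g(ρ_i,ρ_j)(β_i-β_j)² ω_{ij} : ∑β_i = 0, ∑β_i² = 1 }`. -/
noncomputable def gammaP {n : ℕ} (ω : Fin n → Fin n → ℝ) (g : ℝ → ℝ → ℝ)
    (ρ : Fin n → ℝ) : ℝ :=
  sInf { x | ∃ β : Fin n → ℝ, ∑ i, β i = 0 ∧ ∑ i, (β i)^2 = 1 ∧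
    x = (1/2) * ∑ i, ∑ j, g (ρ i) (ρ j) * (β i - β j)^2 * ω i j }


/-- The weighted graph Laplacian as a linear map. -/
noncomputable def Lap {n : ℕ} (ω : Fin n → Fin n → ℝ) (g : ℝ → ℝ → ℝ)
    (ρ : Fin n → ℝ) : (Fin n → ℝ) →ₗ[ℝ] (Fin n → ℝ) where
  toFun φ := fun i => ∑ j, ω i j * g (ρ i) (ρ j) * (φ i - φ j)
  map_add' φ ψ := by
    funext i
    simp only [Pi.add_apply, ← Finset.sum_add_distrib]
    exact Finset.sum_congr rfl fun j _ => by ring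
  map_smul' c φ := by
    funext i
    simp only [Pi.smul_apply, smul_eq_mul, RingHom.id_apply, Finset.mul_sum]
    exact Finset.sum_congr rfl fun j _ => by ring

/-- Summation as a linear functional. -/
noncomputable def sumF (n : ℕ) : (Fin n → ℝ) →ₗ[ℝ] ℝ where
  toFun φ := ∑ i, φ i
  map_add' φ ψ := by simp [Finset.sum_add_distrib]
  map_smul' c φ := by simp [Finset.mul_sum]

lemma lap_apply {n : ℕ} (ω : Fin n → Fin n → ℝ) (g : ℝ → ℝ → ℝ) (ρ : Fin n → ℝ)
    (φ : Fin n → ℝ) (i : Fin n) :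
    Lap ω g ρ φ i = ∑ j, ω i j * g (ρ i) (ρ j) * (φ i - φ j) := rfl

section lemmas
variable {n : ℕ} (ω : Fin n → Fin n → ℝ) (g : ℝ → ℝ → ℝ) (ρ : Fin n → ℝ)
variable (hωsym : ∀ i j, ω i j = ω j i) (hgsym : ∀ s t, g s t = g t s)

include hωsym hgsym in
/-- quadratic form identity ⟨φ, Lφ⟩ = (1/2)∑∑ g (φi-φj)² ω -/
lemma quad_id (φ : Fin n → ℝ) :
    ∑ i, φ i * Lap ω g ρ φ i =
    (1/2) * ∑ i, ∑ j, g (ρ i) (ρ j) * (φ i - φ j)^2 * ω i j := by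
  have hswap : ∑ i, ∑ j, ω i j * g (ρ i) (ρ j) * (φ i * (φ i - φ j)) =
      ∑ i, ∑ j, ω i j * g (ρ i) (ρ j) * (φ j * (φ j - φ i)) := by
    rw [Finset.sum_comm]
    exact Finset.sum_congr rfl fun i _ => Finset.sum_congr rfl fun j _ => by
      rw [hωsym j i, hgsym (ρ j) (ρ i)]
  have hlhs : ∑ i, φ i * Lap ω g ρ φ i =
      ∑ i, ∑ j, ω i j * g (ρ i) (ρ j) * (φ i * (φ i - φ j)) := by
    refine Finset.sum_congr rfl fun i _ => ?_
    rw [lap_apply, Finset.mul_sum]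
    exact Finset.sum_congr rfl fun j _ => by ring
  have hadd : ∑ i, ∑ j, ω i j * g (ρ i) (ρ j) * (φ i * (φ i - φ j)) +
      ∑ i, ∑ j, ω i j * g (ρ i) (ρ j) * (φ j * (φ j - φ i)) =
      ∑ i, ∑ j, g (ρ i) (ρ j) * (φ i - φ j)^2 * ω i j := by
    rw [← Finset.sum_add_distrib]
    refine Finset.sum_congr rfl fun i _ => ?_
    rw [← Finset.sum_add_distrib]
    exact Finset.sum_congr rfl fun j _ => by ring
  rw [hlhs]
  linarith [hswap, hadd]

include hωsym hgsym in
/-- L maps into mean-zero vectors. -/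
lemma lap_mean_zero (φ : Fin n → ℝ) :
    ∑ i, Lap ω g ρ φ i = 0 := by
  have h : ∑ i, ∑ j, ω i j * g (ρ i) (ρ j) * (φ i - φ j) =
      - ∑ i, ∑ j, ω i j * g (ρ i) (ρ j) * (φ i - φ j) := by
    nth_rewrite 1 [Finset.sum_comm]
    rw [← Finset.sum_neg_distrib]
    refine Finset.sum_congr rfl fun i _ => ?_
    rw [← Finset.sum_neg_distrib]
    refine Finset.sum_congr rfl fun j _ => ?_
    rw [hωsym j i, hgsym (ρ j) (ρ i)]; ring
  have h2 : ∑ i, Lap ω g ρ φ i = ∑ i, ∑ j, ω i j * g (ρ i) (ρ j) * (φ i - φ j) := rfl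
  linarith [h, h2]

lemma gInner_nonneg (hgnonneg : ∀ s t, 0 ≤ g s t) (w : Fin n → Fin n → ℝ) :
    0 ≤ gInner ω g ρ w w := by
  apply mul_nonneg (by norm_num)
  refine Finset.sum_nonneg fun i _ => Finset.sum_nonneg fun j _ => ?_
  split_ifs
  · rw [mul_assoc]; exact mul_nonneg (hgnonneg _ _) (mul_self_nonneg _)
  · exact le_refl 0

lemma gInner_comm (v w : Fin n → Fin n → ℝ) : gInner ω g ρ v w = gInner ω g ρ w v := by
  unfold gInner
  congr 1
  refine Finset.sum_congr rfl fun i _ => Finset.sum_congr rfl fun j _ => ?_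
  split_ifs <;> ring

lemma gInner_expand (a b : Fin n → Fin n → ℝ) :
    gInner ω g ρ (fun i j => a i j - b i j) (fun i j => a i j - b i j) =
    gInner ω g ρ a a - 2 * gInner ω g ρ a b + gInner ω g ρ b b := by
  unfold gInner
  have h : ∀ i j, (if ω i j ≠ 0 then g (ρ i) (ρ j) * (a i j - b i j) * (a i j - b i j) else 0)
      = (if ω i j ≠ 0 then g (ρ i) (ρ j) * a i j * a i j else 0)
        - 2 * (if ω i j ≠ 0 then g (ρ i) (ρ j) * a i j * b i j else 0)
        + (if ω i j ≠ 0 then g (ρ i) (ρ j) * b i j * b i j else 0) := by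
    intro i j; split_ifs <;> ring
  have h2 : ∑ i, ∑ j, (if ω i j ≠ 0 then g (ρ i) (ρ j) * (a i j - b i j) * (a i j - b i j) else 0)
      = ∑ i, ∑ j, (if ω i j ≠ 0 then g (ρ i) (ρ j) * a i j * a i j else 0)
        - 2 * ∑ i, ∑ j, (if ω i j ≠ 0 then g (ρ i) (ρ j) * a i j * b i j else 0)
        + ∑ i, ∑ j, (if ω i j ≠ 0 then g (ρ i) (ρ j) * b i j * b i j else 0) := by
    simp only [h, Finset.sum_add_distrib, Finset.sum_sub_distrib, ← Finset.mul_sum]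
  rw [h2]; ring

/-- pairing identity : ⟨∇φ, v⟩_ρ = (φ, -div v)_{ℓ²} -/
lemma pairing (hωsym : ∀ i j, ω i j = ω j i)
    (hgsym : ∀ s t, g s t = g t s)
    (v : Fin n → Fin n → ℝ) (hv : Skew v) (φ : Fin n → ℝ) :
    gInner ω g ρ (gradG ω φ) v = ∑ i, φ i * (-(gdiv ω g ρ v i)) := by
  set P := ∑ i, ∑ j, g (ρ i) (ρ j) * Real.sqrt (ω i j) * (φ i * v i j) with hP
  have hRHS : ∑ i, φ i * (-(gdiv ω g ρ v i)) = P := by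
    refine Finset.sum_congr rfl fun i _ => ?_
    unfold gdiv
    rw [mul_neg, Finset.mul_sum, ← Finset.sum_neg_distrib]
    refine Finset.sum_congr rfl fun j _ => ?_
    rw [hv j i]; ring
  have hswap : ∑ i, ∑ j, g (ρ i) (ρ j) * Real.sqrt (ω i j) * (φ j * v i j) = -P := by
    rw [Finset.sum_comm, hP, ← Finset.sum_neg_distrib]
    refine Finset.sum_congr rfl fun i _ => ?_
    rw [← Finset.sum_neg_distrib]
    refine Finset.sum_congr rfl fun j _ => ?_
    rw [hωsym j i, hgsym (ρ j) (ρ i), hv j i]; ring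
  have hLHS : gInner ω g ρ (gradG ω φ) v =
      (1/2) * (∑ i, ∑ j, g (ρ i) (ρ j) * Real.sqrt (ω i j) * (φ i * v i j)
        - ∑ i, ∑ j, g (ρ i) (ρ j) * Real.sqrt (ω i j) * (φ j * v i j)) := by
    unfold gInner gradG
    congr 1
    rw [← Finset.sum_sub_distrib]
    refine Finset.sum_congr rfl fun i _ => ?_
    rw [← Finset.sum_sub_distrib]
    refine Finset.sum_congr rfl fun j _ => ?_
    split_ifs with h
    · ring
    · push_neg at h
      rw [h, Real.sqrt_zero]; ring
  rw [hLHS, hswap, hRHS]; ring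

lemma neg_gdiv_grad (hωsym : ∀ i j, ω i j = ω j i) (hωnonneg : ∀ i j, 0 ≤ ω i j)
    (φ : Fin n → ℝ) (i : Fin n) :
    -(gdiv ω g ρ (gradG ω φ) i) = Lap ω g ρ φ i := by
  rw [lap_apply]
  unfold gdiv gradG
  rw [← Finset.sum_neg_distrib]
  refine Finset.sum_congr rfl fun j _ => ?_
  rw [hωsym j i]
  linear_combination g (ρ i) (ρ j) * (φ i - φ j) * (Real.mul_self_sqrt (hωnonneg i j))

lemma gradG_skew (hωsym : ∀ i j, ω i j = ω j i) (φ : Fin n → ℝ) : Skew (gradG ω φ) := by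
  intro i j; unfold gradG; rw [hωsym i j]; ring

end lemmas

/-- solvability of `f = -div_ρ(∇_G φ)` and minimality of the gradient
representative. -/
theorem stmt4 {n : ℕ} (ω : Fin n → Fin n → ℝ) (g : ℝ → ℝ → ℝ)
    (hωsym : ∀ i j, ω i j = ω j i) (hωnonneg : ∀ i j, 0 ≤ ω i j)
    (hgsym : ∀ s t, g s t = g t s) (hgnonneg : ∀ s t, 0 ≤ g s t)
    (ρ : Fin n → ℝ) (hρ : IsProb ρ) (hγ : 0 < gammaP ω g ρ)
    (f : Fin n → ℝ) (hf : ∑ i, f i = 0) :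
    ∃ φ : Fin n → ℝ,
      f = (fun i => -(gdiv ω g ρ (gradG ω φ) i)) ∧
      ∀ v : Fin n → Fin n → ℝ, Skew v → f = (fun i => -(gdiv ω g ρ v i)) →
        gInner ω g ρ (gradG ω φ) (gradG ω φ) ≤ gInner ω g ρ v v := by
  classical
  -- the mean-zero subspace
  set W := LinearMap.ker (sumF n) with hWdef
  have hmem : ∀ x ∈ W, Lap ω g ρ x ∈ W := fun x _ =>
    LinearMap.mem_ker.mpr (lap_mean_zero ω g ρ hωsym hgsym x)
  set L' : W →ₗ[ℝ] W := (Lap ω g ρ).restrict hmem with hL'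
  -- lower bound for the Poincaré set
  have hbdd : BddBelow { x | ∃ β : Fin n → ℝ, ∑ i, β i = 0 ∧ ∑ i, (β i)^2 = 1 ∧
      x = (1/2) * ∑ i, ∑ j, g (ρ i) (ρ j) * (β i - β j)^2 * ω i j } := by
    refine ⟨0, fun y hy => ?_⟩
    obtain ⟨β, -, -, rfl⟩ := hy
    apply mul_nonneg (by norm_num)
    refine Finset.sum_nonneg fun i _ => Finset.sum_nonneg fun j _ => ?_
    exact mul_nonneg (mul_nonneg (hgnonneg _ _) (sq_nonneg _)) (hωnonneg i j)
  -- injectivity of the restricted Laplacian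
  have hinj : Function.Injective L' := by
    rw [← LinearMap.ker_eq_bot, eq_bot_iff]
    rintro x hx
    rw [LinearMap.mem_ker] at hx
    have hLx : Lap ω g ρ (x : Fin n → ℝ) = 0 := by
      have h := congrArg Subtype.val hx
      simpa [hL', LinearMap.restrict_apply] using h
    have hQ : (1/2) * ∑ i, ∑ j, g (ρ i) (ρ j) *
        ((x : Fin n → ℝ) i - (x : Fin n → ℝ) j)^2 * ω i j = 0 := by
      rw [← quad_id ω g ρ hωsym hgsym]
      simp [hLx]
    rw [Submodule.mem_bot]
    by_contra hx0
    have hxv : (x : Fin n → ℝ) ≠ 0 := fun h => hx0 (Subtype.ext h)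
    obtain ⟨i0, hi0⟩ := Function.ne_iff.mp hxv
    rw [Pi.zero_apply] at hi0
    set c := ∑ i, ((x : Fin n → ℝ) i)^2 with hc
    have hcpos : 0 < c :=
      Finset.sum_pos' (fun i _ => sq_nonneg _)
        ⟨i0, Finset.mem_univ _, lt_of_le_of_ne (sq_nonneg _) (Ne.symm (pow_ne_zero 2 hi0))⟩
    have hsq : Real.sqrt c ^ 2 = c := Real.sq_sqrt hcpos.le
    have hsqne : Real.sqrt c ≠ 0 := by positivity
    set β : Fin n → ℝ := fun i => (x : Fin n → ℝ) i / Real.sqrt c with hβ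
    have hxW : ∑ i, (x : Fin n → ℝ) i = 0 := by
      exact LinearMap.mem_ker.mp x.2
    have hb1 : ∑ i, β i = 0 := by
      simp only [hβ, ← Finset.sum_div, hxW, zero_div]
    have hb2 : ∑ i, (β i)^2 = 1 := by
      simp only [hβ, div_pow, hsq, ← Finset.sum_div, ← hc]
      exact div_self hcpos.ne'
    have hS0 : ∑ i, ∑ j, g (ρ i) (ρ j) *
        ((x : Fin n → ℝ) i - (x : Fin n → ℝ) j)^2 * ω i j = 0 := by linarith
    have hmemS : (0:ℝ) ∈ { y | ∃ β : Fin n → ℝ, ∑ i, β i = 0 ∧ ∑ i, (β i)^2 = 1 ∧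
        y = (1/2) * ∑ i, ∑ j, g (ρ i) (ρ j) * (β i - β j)^2 * ω i j } := by
      refine ⟨β, hb1, hb2, ?_⟩
      have hconv : ∑ i, ∑ j, g (ρ i) (ρ j) * (β i - β j)^2 * ω i j =
          (1/c) * ∑ i, ∑ j, g (ρ i) (ρ j) *
            ((x : Fin n → ℝ) i - (x : Fin n → ℝ) j)^2 * ω i j := by
        rw [Finset.mul_sum]
        refine Finset.sum_congr rfl fun i _ => ?_
        rw [Finset.mul_sum]
        refine Finset.sum_congr rfl fun j _ => ?_
        have hd : (β i - β j)^2 =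
            ((x : Fin n → ℝ) i - (x : Fin n → ℝ) j)^2 / c := by
          rw [hβ, div_sub_div_same, div_pow, hsq]
        rw [hd]; ring
      rw [hconv, hS0]; ring
    have hle : gammaP ω g ρ ≤ 0 := csInf_le hbdd hmemS
    linarith
  have hsurj : Function.Surjective L' := (LinearMap.injective_iff_surjective).mp hinj
  have hfW : f ∈ W := LinearMap.mem_ker.mpr hf
  obtain ⟨ψ, hψ⟩ := hsurj ⟨f, hfW⟩
  have hLf : Lap ω g ρ (ψ : Fin n → ℝ) = f := by
    have h := congrArg Subtype.val hψ
    simpa [hL', LinearMap.restrict_apply] using h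
  have hrep : f = (fun i => -(gdiv ω g ρ (gradG ω (ψ : Fin n → ℝ)) i)) := by
    funext i
    rw [neg_gdiv_grad ω g ρ hωsym hωnonneg, hLf]
  refine ⟨(ψ : Fin n → ℝ), hrep, ?_⟩
  intro v hv hfv
  set dφ := gradG ω (ψ : Fin n → ℝ) with hdφ
  have hgradskew : Skew dφ := gradG_skew ω hωsym _
  have h1 : gInner ω g ρ dφ v = ∑ i, (ψ : Fin n → ℝ) i * f i := by
    rw [pairing ω g ρ hωsym hgsym v hv]
    refine Finset.sum_congr rfl fun i _ => ?_
    rw [congrFun hfv i]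
  have h2 : gInner ω g ρ dφ dφ = ∑ i, (ψ : Fin n → ℝ) i * f i := by
    rw [pairing ω g ρ hωsym hgsym dφ hgradskew]
    refine Finset.sum_congr rfl fun i _ => ?_
    rw [congrFun hrep i]
  have h3 : 0 ≤ gInner ω g ρ (fun i j => v i j - dφ i j) (fun i j => v i j - dφ i j) :=
    gInner_nonneg ω g ρ hgnonneg _
  rw [gInner_expand ω g ρ v dφ] at h3
  have hcomm : gInner ω g ρ v dφ = gInner ω g ρ dφ v := gInner_comm ω g ρ v dφ
  linarith
end

section
/- Assume ∫₀¹ dr/√(g(r,1−r)) < ∞. Then for any ρ⁰, ρ¹ ∈ P(G) on a connected graph G, there exists a solution (σ, m) of the continuity equation σ̇ + ∇_G·m = 0 with σ(0) = ρ⁰, σ(1) = ρ¹, and finite action ∫₀¹ Σ_{(i,j)∈E} F(g(σᵢ,σⱼ), m_{ij}) dt < ∞, where F(a,b) = b²/a for a > 0, F(0,0) = 0, F(0,b) = ∞ for b ≠ 0. Consequently the graph Wasserstein distance 𝒲(ρ⁰, ρ¹) is finite for all ρ⁰, ρ¹ ∈ P(G). -/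
open Finset MeasureTheory

/-- The continuity equation `σ̇ + ∇_G·m = 0` on `[0,1]` in the sense of distributions. -/
def ContEqM {n : ℕ} (ω : Fin n → Fin n → ℝ)
    (σ : ℝ → Fin n → ℝ) (m : ℝ → Fin n → Fin n → ℝ) : Prop :=
  ∀ φ φ' : ℝ → Fin n → ℝ, (∀ t, HasDerivAt φ (φ' t) t) → Continuous φ' →
    dotl2 (φ 1) (σ 1) - dotl2 (φ 0) (σ 0)
      - ∫ t in (0:ℝ)..1,
          (dotl2 (φ' t) (σ t)
            + (1/2) * ∑ i, ∑ j, (if ω i j ≠ 0 then gradG ω (φ t) i j * m t i j else 0)) = 0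

/-- `F(a,b) = b²/a` for `a > 0`, `F(0,0) = 0`, `F(0,b) = ∞` for `b ≠ 0`. -/
noncomputable def Fq (a b : ℝ) : ENNReal :=
  if 0 < a then ENNReal.ofReal (b^2 / a) else if b = 0 then 0 else ⊤

/-- The action `∫₀¹ ∑_{(i,j)∈E} F(g(σ_i,σ_j), m_{ij}) dt` of a curve `(σ, m)`. -/
noncomputable def mAction {n : ℕ} (ω : Fin n → Fin n → ℝ) (g : ℝ → ℝ → ℝ)
    (σ : ℝ → Fin n → ℝ) (m : ℝ → Fin n → Fin n → ℝ) : ENNReal :=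
  ∫⁻ t in Set.Icc (0:ℝ) 1,
    ∑ i, ∑ j, (if ω i j ≠ 0 then Fq (g (σ t i) (σ t j)) (m t i j) else 0)

/-- The squared graph Wasserstein distance `𝒲²(ρ⁰, ρ¹)`. -/
noncomputable def W2sq {n : ℕ} (ω : Fin n → Fin n → ℝ) (g : ℝ → ℝ → ℝ)
    (ρ0 ρ1 : Fin n → ℝ) : ENNReal :=
  ⨅ (σ : ℝ → Fin n → ℝ) (m : ℝ → Fin n → Fin n → ℝ) (_ : Continuous σ)
    (_ : ∀ t ∈ Set.Icc (0:ℝ) 1, IsProb (σ t)) (_ : ContEqM ω σ m)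
    (_ : σ 0 = ρ0) (_ : σ 1 = ρ1),
    mAction ω g σ m

lemma Fq_zero (a : ℝ) : Fq a 0 = 0 := by unfold Fq; split_ifs <;> simp_all

lemma Fq_two (a b : ℝ) : Fq a (2*b) ≤ 4 * Fq a b := by
  unfold Fq
  split_ifs with h h2 h3
  · rw [show (2*b)^2/a = 4*(b^2/a) by ring, ENNReal.ofReal_mul (by norm_num)]
    norm_num
  · simp
  · exact absurd (by linarith : b = 0) h3
  · exact absurd (by rw [‹b = 0›]; ring) h2
  · rw [ENNReal.mul_top (by norm_num)]

lemma cont_ite {c : Prop} [Decidable c] {f : ℝ → ℝ} (hf : Continuous f) :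
    Continuous fun t => if c then f t else 0 := by
  by_cases h : c <;> simp only [if_pos, if_neg, h]
  · exact hf
  · exact continuous_const

lemma sum_pair {n : ℕ} {i j : Fin n} (hij : i ≠ j) (f : Fin n → Fin n → ℝ)
    (hf : ∀ a b, ¬(a = i ∧ b = j) → ¬(a = j ∧ b = i) → f a b = 0) :
    ∑ a, ∑ b, f a b = f i j + f j i := by
  have inner : ∀ a, ∑ b, f a b
      = (if a = i then f i j else 0) + (if a = j then f j i else 0) := by
    intro a
    by_cases hai : a = i
    · subst hai
      rw [if_pos rfl, if_neg hij, add_zero]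
      apply Finset.sum_eq_single_of_mem j (Finset.mem_univ j)
      intro b _ hbj
      exact hf a b (fun h => hbj h.2) (fun h => hij h.1)
    · by_cases haj : a = j
      · subst haj
        rw [if_neg hai, if_pos rfl, zero_add]
        apply Finset.sum_eq_single_of_mem i (Finset.mem_univ i)
        intro b _ hbi
        exact hf a b (fun h => hai h.1) (fun h => hbi h.2)
      · rw [if_neg hai, if_neg haj, add_zero]
        exact Finset.sum_eq_zero fun b _ => hf a b (fun h => hai h.1) (fun h => haj h.1)
  rw [Finset.sum_congr rfl (fun a _ => inner a)]
  simp [Finset.sum_add_distrib, hij]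

lemma G_cont {n : ℕ} (ω : Fin n → Fin n → ℝ) {σ : ℝ → Fin n → ℝ}
    {m : ℝ → Fin n → Fin n → ℝ} {φ φ' : ℝ → Fin n → ℝ}
    (hσ : Continuous σ) (hm : Continuous m) (hφ : Continuous φ) (hφ' : Continuous φ') :
    Continuous (fun t => dotl2 (φ' t) (σ t)
      + (1/2) * ∑ i, ∑ j, (if ω i j ≠ 0 then gradG ω (φ t) i j * m t i j else 0)) := by
  apply Continuous.add
  · exact continuous_finset_sum _ fun v _ =>
      ((continuous_apply v).comp hφ').mul ((continuous_apply v).comp hσ)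
  · apply continuous_const.mul
    apply continuous_finset_sum _ fun i _ => continuous_finset_sum _ fun j _ => ?_
    exact cont_ite ((continuous_const.mul
      (((continuous_apply i).comp hφ).sub ((continuous_apply j).comp hφ))).mul
      ((continuous_apply j).comp ((continuous_apply i).comp hm)))

lemma conteq_of_hasDeriv {n : ℕ} (ω : Fin n → Fin n → ℝ) (σ : ℝ → Fin n → ℝ)
    (m : ℝ → Fin n → Fin n → ℝ) (hσ : Continuous σ) (hm : Continuous m)
    (H : ∀ φ φ' : ℝ → Fin n → ℝ, (∀ t, HasDerivAt φ (φ' t) t) → Continuous φ' →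
      ∀ t, HasDerivAt (fun u => dotl2 (φ u) (σ u))
        (dotl2 (φ' t) (σ t)
          + (1/2) * ∑ i, ∑ j, (if ω i j ≠ 0 then gradG ω (φ t) i j * m t i j else 0)) t) :
    ContEqM ω σ m := by
  intro φ φ' hφ hφ'
  have hφd : Differentiable ℝ φ := fun t => (hφ t).differentiableAt
  have hφc : Continuous φ := hφd.continuous
  rw [intervalIntegral.integral_eq_sub_of_hasDerivAt (fun t _ => H φ φ' hφ hφ' t)
    ((G_cont ω hσ hm hφc hφ').intervalIntegrable 0 1)]
  simp

def ChainP {n : ℕ} (ω : Fin n → Fin n → ℝ) (g : ℝ → ℝ → ℝ) (ρ ρ' : Fin n → ℝ) : Prop :=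
  ∃ (σ : ℝ → Fin n → ℝ) (m : ℝ → Fin n → Fin n → ℝ) (C : ℝ),
    Continuous σ ∧ Continuous m ∧ (∀ t ∈ Set.Icc (0:ℝ) 1, IsProb (σ t)) ∧
    ContEqM ω σ m ∧ σ 0 = ρ ∧ σ 1 = ρ' ∧ m 0 = 0 ∧ m 1 = 0 ∧
    (∀ t ∈ Set.Icc (0:ℝ) 1,
      (∑ i, ∑ j, if ω i j ≠ 0 then Fq (g (σ t i) (σ t j)) (m t i j) else 0) ≤ ENNReal.ofReal C)

set_option maxHeartbeats 2000000 in
lemma chain_edge {n : ℕ} (ω : Fin n → Fin n → ℝ) (g : ℝ → ℝ → ℝ)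
    (hωsym : ∀ i j, ω i j = ω j i) (hωnonneg : ∀ i j, 0 ≤ ω i j)
    (hgsym : ∀ s t, g s t = g t s)
    (hgbd : ∀ s t : ℝ, 0 ≤ s → 0 ≤ t → min s t ≤ g s t ∧ g s t ≤ max s t)
    {i j : Fin n} (hij : i ≠ j) (he : ω i j ≠ 0) {δ : ℝ} (hδ0 : 0 ≤ δ)
    {ρ : Fin n → ℝ} (hρ : IsProb ρ) (hδρ : δ ≤ ρ i) :
    ChainP ω g ρ (fun v => ρ v + δ * ((if v = j then 1 else 0) - (if v = i then 1 else 0))) := by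
  have hw : 0 < ω i j := (hωnonneg i j).lt_of_ne (Ne.symm he)
  have hsw : 0 < Real.sqrt (ω i j) := Real.sqrt_pos.mpr hw
  set s : ℝ → ℝ := fun t => 3*t^2 - 2*t^3 with hs_def
  set sd : ℝ → ℝ := fun t => 6*t - 6*t^2 with hsd_def
  set d : Fin n → ℝ := fun v => (if v = j then 1 else 0) - (if v = i then 1 else 0) with hd_def
  set p : Fin n → Fin n → ℝ := fun a b =>
    (if a = j ∧ b = i then 1 else 0) - (if a = i ∧ b = j then 1 else 0) with hp_def
  have hji : j ≠ i := Ne.symm hij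
  have hs_eval : ∀ u : ℝ, s u = 3*u^2 - 2*u^3 := fun u => rfl
  have hsd_eval : ∀ u : ℝ, sd u = 6*u - 6*u^2 := fun u => rfl
  have hdi : d i = -1 := by simp [hd_def, hij]
  have hdj : d j = 1 := by simp [hd_def, hji]
  have hs_cont : Continuous s := by
    rw [hs_def]; exact (continuous_const.mul (continuous_pow 2)).sub
      (continuous_const.mul (continuous_pow 3))
  have hsd_cont : Continuous sd := by
    rw [hsd_def]; exact (continuous_const.mul continuous_id).sub
      (continuous_const.mul (continuous_pow 2))
  have hσc : Continuous (fun t v => ρ v + δ * s t * d v : ℝ → Fin n → ℝ) :=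
    continuous_pi fun v => continuous_const.add
      ((continuous_const.mul hs_cont).mul continuous_const)
  have hmc : Continuous (fun t a b => δ * sd t * p a b / Real.sqrt (ω i j) :
      ℝ → Fin n → Fin n → ℝ) :=
    continuous_pi fun a => continuous_pi fun b =>
      (((continuous_const.mul hsd_cont).mul continuous_const).div_const _)
  refine ⟨fun t v => ρ v + δ * s t * d v,
    fun t a b => δ * sd t * p a b / Real.sqrt (ω i j),
    (n*n : ℕ) * (36*δ/(ω i j)), hσc, hmc, ?_, ?_, ?_, ?_, ?_, ?_, ?_⟩
  · -- IsProb
    rintro t ⟨ht0, ht1⟩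
    have hs0 : 0 ≤ s t := by
      rw [hs_eval]
      nlinarith [mul_nonneg (mul_nonneg ht0 ht0) (by linarith : (0:ℝ) ≤ 3 - 2*t)]
    have hs1 : s t ≤ 1 := by
      rw [hs_eval]
      nlinarith [mul_nonneg (mul_nonneg (by linarith : (0:ℝ) ≤ 1-t) (by linarith : (0:ℝ) ≤ 1-t)) (by linarith : (0:ℝ) ≤ 1 + 2*t)]
    constructor
    · intro v
      show 0 ≤ ρ v + δ * s t * d v
      by_cases hvi : v = i
      · have hdv : d v = -1 := by rw [hvi]; exact hdi
        have hρv : δ ≤ ρ v := by rw [hvi]; exact hδρ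
        rw [hdv]
        nlinarith [mul_nonneg hδ0 (by linarith : (0:ℝ) ≤ 1 - s t)]
      · by_cases hvj : v = j
        · have hdv : d v = 1 := by rw [hvj]; exact hdj
          rw [hdv]
          nlinarith [hρ.1 v, mul_nonneg hδ0 hs0]
        · have hdv : d v = 0 := by simp [hd_def, hvi, hvj]
          rw [hdv]; simpa using hρ.1 v
    · show ∑ v, (ρ v + δ * s t * d v) = 1
      have hsum_d : ∑ v, d v = 0 := by
        simp [hd_def, Finset.sum_sub_distrib]
      rw [Finset.sum_add_distrib, hρ.2]
      simp_rw [← Finset.mul_sum, hsum_d]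
      ring
  · -- ContEqM
    apply conteq_of_hasDeriv _ _ _ hσc hmc
    intro φ φ' hφ hφ' t
    have hφv : ∀ v, HasDerivAt (fun u => φ u v) (φ' t v) t := fun v =>
      hasDerivAt_pi.mp (hφ t) v
    have hst : HasDerivAt s (sd t) t := by
      have h1 := ((hasDerivAt_pow 2 t).const_mul (3:ℝ)).fun_sub
        ((hasDerivAt_pow 3 t).const_mul (2:ℝ))
      rw [hs_def, hsd_eval]
      refine h1.congr_deriv ?_
      push_cast; ring
    have hsum : HasDerivAt (fun u => ∑ v, φ u v * (ρ v + δ * s u * d v))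
        (∑ v, (φ' t v * (ρ v + δ * s t * d v) + φ t v * (δ * sd t * d v))) t :=
      HasDerivAt.fun_sum fun v _ =>
        (hφv v).mul ((((hst.const_mul δ)).mul_const (d v)).const_add (ρ v))
    have hmterm : (1/2 : ℝ) * ∑ a, ∑ b, (if ω a b ≠ 0 then
        gradG ω (φ t) a b * (δ * sd t * p a b / Real.sqrt (ω i j)) else 0)
        = δ * sd t * (φ t j - φ t i) := by
      rw [sum_pair hij _ ?_]
      · have hpij : p i j = -1 := by simp [hp_def, hij]
        have hpji : p j i = 1 := by simp [hp_def, hji, hij]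
        rw [if_pos he, if_pos (by rw [hωsym j i]; exact he)]
        simp only [gradG, hpij, hpji, hωsym j i]
        have h2 : Real.sqrt (ω i j) * Real.sqrt (ω i j) = ω i j :=
          Real.mul_self_sqrt hw.le
        field_simp
        linear_combination
      · intro a b h1 h2
        have hp0 : p a b = 0 := by simp [hp_def, if_neg h1, if_neg h2]
        split_ifs <;> simp [hp0]
    have hphi_d : ∑ v, φ t v * (δ * sd t * d v) = δ * sd t * (φ t j - φ t i) := by
      have : ∀ v, φ t v * (δ * sd t * d v) = δ * sd t * (φ t v * d v) := fun v => by ring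
      simp_rw [this, ← Finset.mul_sum]
      congr 1
      simp [hd_def, mul_sub, Finset.sum_sub_distrib, mul_ite, mul_one, mul_zero]
    simp only [dotl2]
    rw [hmterm, ← hphi_d, ← Finset.sum_add_distrib]
    exact hsum
  · funext v; show ρ v + δ * s 0 * d v = ρ v; rw [hs_eval]; norm_num
  · funext v; show ρ v + δ * s 1 * d v = ρ v + δ * d v; rw [hs_eval]; norm_num
  · funext a b; show δ * sd 0 * p a b / Real.sqrt (ω i j) = 0; rw [hsd_eval]; norm_num
  · funext a b; show δ * sd 1 * p a b / Real.sqrt (ω i j) = 0; rw [hsd_eval]; norm_num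
  · -- action bound
    rintro t ⟨ht0, ht1⟩
    have key : ∀ a b, (if ω a b ≠ 0 then
        Fq (g (ρ a + δ * s t * d a) (ρ b + δ * s t * d b))
          (δ * sd t * p a b / Real.sqrt (ω i j)) else 0)
        ≤ ENNReal.ofReal (36*δ/(ω i j)) := by
      intro a b
      by_cases hc : ω a b ≠ 0
      swap
      · rw [if_neg hc]; exact zero_le
      rw [if_pos hc]
      by_cases hm0 : δ * sd t * p a b / Real.sqrt (ω i j) = 0
      · rw [hm0, Fq_zero]; exact zero_le
      have hδpos : 0 < δ := by
        rcases hδ0.lt_or_eq with h | h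
        · exact h
        · exact absurd (by rw [← h]; simp : δ * sd t * p a b / Real.sqrt (ω i j) = 0) hm0
      have hsd0 : sd t ≠ 0 := fun h => hm0 (by rw [h]; simp)
      have hpab : p a b ≠ 0 := fun h => hm0 (by rw [h]; simp)
      have hpair : (a = i ∧ b = j) ∨ (a = j ∧ b = i) := by
        by_contra hcon
        push_neg at hcon
        refine hpab ?_
        show (if a = j ∧ b = i then (1:ℝ) else 0) - (if a = i ∧ b = j then 1 else 0) = 0
        rw [if_neg (fun h => hcon.2 h.1 h.2), if_neg (fun h => hcon.1 h.1 h.2)]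
        ring
      have ht0' : 0 < t := ht0.lt_of_ne fun h => hsd0 (by rw [hsd_eval, ← h]; norm_num)
      have ht1' : t < 1 := lt_of_le_of_ne ht1 fun h => hsd0 (by rw [hsd_eval, h]; norm_num)
      have hs0 : 0 < s t := by rw [hs_eval]; nlinarith
      have hs1 : s t < 1 := by
        rw [hs_eval]
        nlinarith [mul_pos (mul_pos (by linarith : (0:ℝ) < 1-t) (by linarith : (0:ℝ) < 1-t)) (by linarith : (0:ℝ) < 1 + 2*t)]
      have hA : δ * (1 - s t) ≤ ρ i + δ * s t * d i := by rw [hdi]; nlinarith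
      have hB : δ * s t ≤ ρ j + δ * s t * d j := by rw [hdj]; nlinarith [hρ.1 j]
      have hA0 : 0 < ρ i + δ * s t * d i := by nlinarith
      have hB0 : 0 < ρ j + δ * s t * d j := by nlinarith
      have hgAB : 0 < g (ρ i + δ * s t * d i) (ρ j + δ * s t * d j) :=
        lt_of_lt_of_le (lt_min hA0 hB0) (hgbd _ _ hA0.le hB0.le).1
      have ht2 : t^2 ≤ 1 := by nlinarith
      have h36a : sd t^2 ≤ 36 * s t := by
        rw [hsd_eval, hs_eval]; nlinarith [ht2, sq_nonneg t]
      have h36b : sd t^2 ≤ 36 * (1 - s t) := by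
        rw [hsd_eval, hs_eval]
        nlinarith [mul_nonneg (sq_nonneg (1-t)) (show (0:ℝ) ≤ 1 + 2*t - t^2 by nlinarith)]
      have hminAB : min (ρ i + δ * s t * d i) (ρ j + δ * s t * d j)
          ≤ g (ρ i + δ * s t * d i) (ρ j + δ * s t * d j) := (hgbd _ _ hA0.le hB0.le).1
      have hkey : δ * sd t^2 ≤ 36 * g (ρ i + δ * s t * d i) (ρ j + δ * s t * d j) := by
        rcases le_total (s t) (1 - s t) with h | h
        · have h1 : δ * s t ≤ g (ρ i + δ * s t * d i) (ρ j + δ * s t * d j) :=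
            le_trans (le_min (by nlinarith [mul_le_mul_of_nonneg_left h hδ0]) hB) hminAB
          nlinarith [mul_le_mul_of_nonneg_left h36a hδ0]
        · have h1 : δ * (1 - s t) ≤ g (ρ i + δ * s t * d i) (ρ j + δ * s t * d j) :=
            le_trans (le_min hA (by nlinarith [mul_le_mul_of_nonneg_left h hδ0])) hminAB
          nlinarith [mul_le_mul_of_nonneg_left h36b hδ0]
      have hpij : p i j = -1 := by simp [hp_def, hij]
      have hpji : p j i = 1 := by simp [hp_def, hji, hij]
      rcases hpair with ⟨ha, hb⟩ | ⟨ha, hb⟩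
      · rw [ha, hb, Fq, if_pos hgAB]
        apply ENNReal.ofReal_le_ofReal
        have hmv : (δ * sd t * p i j / Real.sqrt (ω i j))^2 = δ^2 * sd t^2 / ω i j := by
          rw [div_pow, Real.sq_sqrt hw.le, mul_pow, mul_pow, hpij]
          ring
        rw [hmv, div_div, div_le_div_iff₀ (by positivity) hw]
        nlinarith [mul_le_mul_of_nonneg_left hkey (mul_nonneg hδ0 hw.le), sq_nonneg (sd t)]
      · rw [ha, hb, hgsym, Fq, if_pos hgAB]
        apply ENNReal.ofReal_le_ofReal
        have hmv : (δ * sd t * p j i / Real.sqrt (ω i j))^2 = δ^2 * sd t^2 / ω i j := by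
          rw [div_pow, Real.sq_sqrt hw.le, mul_pow, mul_pow, hpji]
          ring
        rw [hmv, div_div, div_le_div_iff₀ (by positivity) hw]
        nlinarith [mul_le_mul_of_nonneg_left hkey (mul_nonneg hδ0 hw.le), sq_nonneg (sd t)]
    calc (∑ a, ∑ b, if ω a b ≠ 0 then
          Fq (g (ρ a + δ * s t * d a) (ρ b + δ * s t * d b))
            (δ * sd t * p a b / Real.sqrt (ω i j)) else 0)
        ≤ ∑ a : Fin n, ∑ b : Fin n, ENNReal.ofReal (36*δ/(ω i j)) :=
          Finset.sum_le_sum fun a _ => Finset.sum_le_sum fun b _ => key a b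
      _ = (n*n : ℕ) • ENNReal.ofReal (36*δ/(ω i j)) := by
          simp [Finset.sum_const, Finset.card_univ, smul_smul]
          ring
      _ ≤ ENNReal.ofReal ((n*n : ℕ) * (36*δ/(ω i j))) := by
          rw [nsmul_eq_mul, ENNReal.ofReal_mul (by positivity), ENNReal.ofReal_natCast]

lemma chain_refl {n : ℕ} (ω : Fin n → Fin n → ℝ) (g : ℝ → ℝ → ℝ)
    {ρ : Fin n → ℝ} (hρ : IsProb ρ) : ChainP ω g ρ ρ := by
  refine ⟨fun _ => ρ, fun _ _ _ => 0, 0, continuous_const, continuous_const,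
    fun t _ => hρ, ?_, rfl, rfl, rfl, rfl, ?_⟩
  · apply conteq_of_hasDeriv _ _ _ continuous_const continuous_const
    intro φ φ' hφ hφ' t
    have hφv : ∀ v, HasDerivAt (fun u => φ u v) (φ' t v) t := fun v =>
      hasDerivAt_pi.mp (hφ t) v
    have hsum : HasDerivAt (fun u => ∑ v, φ u v * ρ v) (∑ v, φ' t v * ρ v) t :=
      HasDerivAt.fun_sum fun v _ => (hφv v).mul_const (ρ v)
    simp only [dotl2, mul_zero, ite_self, Finset.sum_const_zero, add_zero]
    exact hsum
  · intro t _
    simp [Fq_zero]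

lemma chain_symm {n : ℕ} {ω : Fin n → Fin n → ℝ} {g : ℝ → ℝ → ℝ}
    {ρ ρ' : Fin n → ℝ} (h : ChainP ω g ρ ρ') : ChainP ω g ρ' ρ := by
  obtain ⟨σ, m, C, hσ, hm, hprob, hce, h0, h1, hm0, hm1, hbd⟩ := h
  have hrevc : Continuous (fun t : ℝ => 1 - t) := continuous_const.sub continuous_id
  refine ⟨fun t => σ (1-t), fun t a b => -(m (1-t) a b), C,
    hσ.comp hrevc,
    continuous_pi fun a => continuous_pi fun b =>
      ((continuous_apply b).comp ((continuous_apply a).comp (hm.comp hrevc))).neg,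
    ?_, ?_, ?_, ?_, ?_, ?_, ?_⟩
  · intro t ht
    exact hprob (1-t) ⟨by linarith [ht.2], by linarith [ht.1]⟩
  · intro φ φ' hφ hφ'
    set ψ : ℝ → Fin n → ℝ := fun s => φ (1-s) with hψdef
    set ψ' : ℝ → Fin n → ℝ := fun s => -φ' (1-s) with hψ'def
    have hψ : ∀ s, HasDerivAt ψ (ψ' s) s := by
      intro s
      have hh : HasDerivAt (fun u : ℝ => 1 - u) (-1) s := (hasDerivAt_id s).const_sub 1
      have := (hφ (1-s)).scomp s hh
      simpa [hψdef, hψ'def, Function.comp_def] using this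
    set F : ℝ → ℝ := fun u => dotl2 (ψ' u) (σ u)
      + (1/2) * ∑ i, ∑ j, (if ω i j ≠ 0 then gradG ω (ψ u) i j * m u i j else 0) with hF
    have E := hce ψ ψ' hψ ((hφ'.comp hrevc).neg)
    rw [← hF] at E
    have e1 : ψ 1 = φ 0 := by show φ (1-1) = φ 0; norm_num
    have e0 : ψ 0 = φ 1 := by show φ (1-0) = φ 1; norm_num
    rw [e1, e0] at E
    have hI : ∀ t : ℝ, (dotl2 (φ' t) (σ (1-t))
        + (1/2) * ∑ i, ∑ j, (if ω i j ≠ 0 then gradG ω (φ t) i j * (-(m (1-t) i j)) else 0))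
        = -(F (1-t)) := by
      intro t
      have h1 : ψ (1-t) = φ t := by show φ (1-(1-t)) = φ t; norm_num
      have h2 : ψ' (1-t) = -φ' t := by show -φ' (1-(1-t)) = -φ' t; norm_num
      rw [hF]
      simp only [h1, h2]
      have h3 : ∀ i j : Fin n, (if ω i j ≠ 0 then gradG ω (φ t) i j * (-(m (1-t) i j)) else 0)
          = -(if ω i j ≠ 0 then gradG ω (φ t) i j * m (1-t) i j else 0) := fun i j => by
        split_ifs <;> ring
      simp_rw [h3]
      simp [dotl2, Finset.sum_neg_distrib]
      ring
    show dotl2 (φ 1) (σ (1-1)) - dotl2 (φ 0) (σ (1-0))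
      - ∫ t in (0:ℝ)..1, (dotl2 (φ' t) (σ (1-t))
        + (1/2) * ∑ i, ∑ j, (if ω i j ≠ 0 then gradG ω (φ t) i j * (-(m (1-t) i j)) else 0)) = 0
    rw [intervalIntegral.integral_congr (g := fun t => -(F (1-t))) (fun t _ => hI t),
      intervalIntegral.integral_neg, intervalIntegral.integral_comp_sub_left F 1]
    norm_num at E ⊢
    linarith
  · show σ (1-0) = ρ'
    rw [show (1:ℝ)-0 = 1 by norm_num, h1]
  · show σ (1-1) = ρ
    rw [show (1:ℝ)-1 = 0 by norm_num, h0]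
  · funext a b
    show -(m (1-0) a b) = 0
    rw [show (1:ℝ)-0 = 1 by norm_num]
    simp [hm1]
  · funext a b
    show -(m (1-1) a b) = 0
    rw [show (1:ℝ)-1 = 0 by norm_num]
    simp [hm0]
  · intro t ht
    have hb := hbd (1-t) ⟨by linarith [ht.2], by linarith [ht.1]⟩
    have h3 : ∀ a b : Fin n, Fq (g (σ (1-t) a) (σ (1-t) b)) (-(m (1-t) a b))
        = Fq (g (σ (1-t) a) (σ (1-t) b)) (m (1-t) a b) := fun a b => by
      unfold Fq; split_ifs <;> simp_all
    simp only [h3]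
    exact hb

set_option maxHeartbeats 2000000 in
lemma chain_trans {n : ℕ} {ω : Fin n → Fin n → ℝ} {g : ℝ → ℝ → ℝ}
    {ρ ρ' ρ'' : Fin n → ℝ} (h1 : ChainP ω g ρ ρ') (h2 : ChainP ω g ρ' ρ'') :
    ChainP ω g ρ ρ'' := by
  obtain ⟨σ₁, m₁, C₁, hσ₁, hm₁, hp₁, hce₁, ha₁, hb₁, hz₁, ho₁, hbd₁⟩ := h1
  obtain ⟨σ₂, m₂, C₂, hσ₂, hm₂, hp₂, hce₂, ha₂, hb₂, hz₂, ho₂, hbd₂⟩ := h2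
  have hmid : σ₁ 1 = σ₂ 0 := by rw [hb₁, ha₂]
  have hmmid : (fun a b => 2 * m₁ 1 a b) = (fun a b => 2 * m₂ 0 a b) := by
    funext a b; simp [ho₁, hz₂]
  set σc : ℝ → Fin n → ℝ := fun t => if t ≤ 1/2 then σ₁ (2*t) else σ₂ (2*t-1) with hσcdef
  set mc : ℝ → Fin n → Fin n → ℝ := fun t => if t ≤ 1/2 then (fun a b => 2 * m₁ (2*t) a b)
    else (fun a b => 2 * m₂ (2*t-1) a b) with hmcdef
  have hσc_le : ∀ t : ℝ, t ≤ 1/2 → σc t = σ₁ (2*t) := fun t ht => if_pos ht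
  have hσc_gt : ∀ t : ℝ, ¬(t ≤ 1/2) → σc t = σ₂ (2*t-1) := fun t ht => if_neg ht
  have hmc_le : ∀ t : ℝ, t ≤ 1/2 → mc t = (fun a b => 2 * m₁ (2*t) a b) := fun t ht => if_pos ht
  have hmc_gt : ∀ t : ℝ, ¬(t ≤ 1/2) → mc t = (fun a b => 2 * m₂ (2*t-1) a b) :=
    fun t ht => if_neg ht
  have hc2t : Continuous (fun t : ℝ => 2*t) := continuous_const.mul continuous_id
  have hc2t1 : Continuous (fun t : ℝ => 2*t-1) := hc2t.sub continuous_const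
  have hσcc : Continuous σc := by
    rw [hσcdef]
    apply Continuous.if_le (hσ₁.comp hc2t) (hσ₂.comp hc2t1) continuous_id continuous_const
    intro t ht
    have ht' : t = 1/2 := ht
    subst ht'
    show σ₁ (2*(1/2)) = σ₂ (2*(1/2)-1)
    rw [show (2:ℝ)*(1/2)-1 = 0 by norm_num, show (2:ℝ)*(1/2) = 1 by norm_num, hmid]
  have hmcc : Continuous mc := by
    rw [hmcdef]
    apply Continuous.if_le ?_ ?_ continuous_id continuous_const
    · intro t ht
      have ht' : t = 1/2 := ht
      subst ht'
      show (fun a b => 2 * m₁ (2*(1/2)) a b) = (fun a b => 2 * m₂ (2*(1/2)-1) a b)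
      rw [show (2:ℝ)*(1/2)-1 = 0 by norm_num, show (2:ℝ)*(1/2) = 1 by norm_num, hmmid]
    · exact continuous_pi fun a => continuous_pi fun b => continuous_const.mul
        ((continuous_apply b).comp ((continuous_apply a).comp (hm₁.comp hc2t)))
    · exact continuous_pi fun a => continuous_pi fun b => continuous_const.mul
        ((continuous_apply b).comp ((continuous_apply a).comp (hm₂.comp hc2t1)))
  refine ⟨σc, mc, 4 * max C₁ C₂, hσcc, hmcc, ?_, ?_, ?_, ?_, ?_, ?_, ?_⟩
  · intro t ht
    by_cases h : t ≤ 1/2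
    · rw [hσc_le t h]; exact hp₁ _ ⟨by linarith [ht.1], by linarith⟩
    · push_neg at h
      rw [hσc_gt t (not_le.mpr h)]; exact hp₂ _ ⟨by linarith, by linarith [ht.2]⟩
  · -- ContEqM
    intro φ φ' hφ hφ'
    have hφd : Differentiable ℝ φ := fun t => (hφ t).differentiableAt
    have hφc : Continuous φ := hφd.continuous
    set φ₁ : ℝ → Fin n → ℝ := fun s => φ (s/2) with hφ₁
    set Dφ₁ : ℝ → Fin n → ℝ := fun s => (1/2 : ℝ) • φ' (s/2) with hDφ₁
    have hd₁ : ∀ s, HasDerivAt φ₁ (Dφ₁ s) s := by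
      intro s
      have hh : HasDerivAt (fun u : ℝ => u/2) (1/2) s := by
        simpa using (hasDerivAt_id s).div_const 2
      have := (hφ (s/2)).scomp s hh
      simpa [hφ₁, hDφ₁, Function.comp_def] using this
    have hc₁' : Continuous Dφ₁ := ((hφ'.comp (continuous_id.div_const 2)).const_smul (1/2 : ℝ))
    set F₁ : ℝ → ℝ := fun s => dotl2 (Dφ₁ s) (σ₁ s)
      + (1/2) * ∑ i, ∑ j, (if ω i j ≠ 0 then gradG ω (φ₁ s) i j * m₁ s i j else 0) with hF₁
    have E₁ := hce₁ φ₁ Dφ₁ hd₁ hc₁'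
    rw [← hF₁] at E₁
    set φ₂ : ℝ → Fin n → ℝ := fun s => φ ((s+1)/2) with hφ₂
    set Dφ₂ : ℝ → Fin n → ℝ := fun s => (1/2 : ℝ) • φ' ((s+1)/2) with hDφ₂
    have hd₂ : ∀ s, HasDerivAt φ₂ (Dφ₂ s) s := by
      intro s
      have hh : HasDerivAt (fun u : ℝ => (u+1)/2) (1/2) s := by
        simpa using ((hasDerivAt_id s).add_const 1).div_const 2
      have := (hφ ((s+1)/2)).scomp s hh
      simpa [hφ₂, hDφ₂, Function.comp_def] using this
    have hc₂' : Continuous Dφ₂ :=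
      ((hφ'.comp ((continuous_id.add continuous_const).div_const 2)).const_smul (1/2 : ℝ))
    set F₂ : ℝ → ℝ := fun s => dotl2 (Dφ₂ s) (σ₂ s)
      + (1/2) * ∑ i, ∑ j, (if ω i j ≠ 0 then gradG ω (φ₂ s) i j * m₂ s i j else 0) with hF₂
    have E₂ := hce₂ φ₂ Dφ₂ hd₂ hc₂'
    rw [← hF₂] at E₂
    set Gf : ℝ → ℝ := fun t => dotl2 (φ' t) (σc t)
      + (1/2) * ∑ i, ∑ j, (if ω i j ≠ 0 then gradG ω (φ t) i j * mc t i j else 0) with hGf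
    have hGcont : Continuous Gf := by rw [hGf]; exact G_cont ω hσcc hmcc hφc hφ'
    have hsplit : ∫ t in (0:ℝ)..1, Gf t
        = (∫ t in (0:ℝ)..(1/2), Gf t) + ∫ t in (1/2:ℝ)..1, Gf t :=
      (intervalIntegral.integral_add_adjacent_intervals
        (hGcont.intervalIntegrable _ _) (hGcont.intervalIntegrable _ _)).symm
    have algebra1 : ∀ (t : ℝ) (σv : Fin n → ℝ) (mv : Fin n → Fin n → ℝ),
        dotl2 (φ' t) σv + (1/2) * ∑ i, ∑ j,
          (if ω i j ≠ 0 then gradG ω (φ t) i j * (2 * mv i j) else 0)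
        = 2 * (dotl2 ((1/2 : ℝ) • φ' t) σv + (1/2) * ∑ i, ∑ j,
          (if ω i j ≠ 0 then gradG ω (φ t) i j * mv i j else 0)) := by
      intro t σv mv
      have hs : ∀ i j : Fin n, (if ω i j ≠ 0 then gradG ω (φ t) i j * (2 * mv i j) else 0)
          = 2 * (if ω i j ≠ 0 then gradG ω (φ t) i j * mv i j else 0) := fun i j => by
        split_ifs <;> ring
      have hdot : dotl2 ((1/2 : ℝ) • φ' t) σv = (1/2) * dotl2 (φ' t) σv := by
        simp [dotl2, Finset.mul_sum, mul_assoc]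
      simp_rw [hs, hdot, ← Finset.mul_sum]
      ring
    have hpc1 : ∫ t in (0:ℝ)..(1/2), Gf t = ∫ t in (0:ℝ)..(1/2), 2 * F₁ (2*t) := by
      apply intervalIntegral.integral_congr
      intro t ht
      rw [Set.uIcc_of_le (by norm_num : (0:ℝ) ≤ 1/2)] at ht
      rw [hGf, hF₁]
      simp only
      rw [hσc_le t ht.2, hmc_le t ht.2, hφ₁, hDφ₁]
      simp only
      rw [show (2*t)/2 = t by ring]
      exact algebra1 t _ _
    have hpc2 : ∫ t in (1/2:ℝ)..1, Gf t = ∫ t in (1/2:ℝ)..1, 2 * F₂ (2*t-1) := by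
      apply intervalIntegral.integral_congr
      intro t ht
      rw [Set.uIcc_of_le (by norm_num : (1/2:ℝ) ≤ 1)] at ht
      rw [hGf, hF₂]
      simp only
      by_cases hteq : t ≤ 1/2
      · have ht2 : t = 1/2 := le_antisymm hteq ht.1
        subst ht2
        rw [hσc_le _ le_rfl, hmc_le _ le_rfl]
        rw [show (2:ℝ)*(1/2)-1 = 0 by norm_num, show (2:ℝ)*(1/2) = 1 by norm_num,
          hmid, hDφ₂, hφ₂]
        simp only
        rw [show ((0:ℝ)+1)/2 = 1/2 by norm_num]
        have h1 : ∀ a b : Fin n, (2:ℝ) * m₁ 1 a b = 2 * m₂ 0 a b := fun a b => by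
          simp [ho₁, hz₂]
        simp_rw [h1]
        exact algebra1 _ _ _
      · rw [hσc_gt t hteq, hmc_gt t hteq, hφ₂, hDφ₂]
        simp only
        rw [show (2*t-1+1)/2 = t by ring]
        exact algebra1 t _ _
    have e10 : φ₁ 0 = φ 0 := by rw [hφ₁]; norm_num
    have e11 : φ₁ 1 = φ (1/2) := by rw [hφ₁]
    have e20 : φ₂ 0 = φ (1/2) := by rw [hφ₂]; norm_num
    have e21 : φ₂ 1 = φ 1 := by rw [hφ₂]; norm_num
    have hv1 : ∫ t in (0:ℝ)..(1/2), 2 * F₁ (2*t)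
        = dotl2 (φ (1/2)) (σ₁ 1) - dotl2 (φ 0) (σ₁ 0) := by
      rw [intervalIntegral.integral_const_mul,
        intervalIntegral.integral_comp_mul_left F₁ (two_ne_zero)]
      rw [e10, e11] at E₁
      rw [show (2:ℝ)*(1/2) = 1 by norm_num, show (2:ℝ)*0 = 0 by norm_num]
      rw [smul_eq_mul]
      have := E₁
      nlinarith [E₁]
    have hv2 : ∫ t in (1/2:ℝ)..1, 2 * F₂ (2*t-1)
        = dotl2 (φ 1) (σ₂ 1) - dotl2 (φ (1/2)) (σ₂ 0) := by
      rw [intervalIntegral.integral_const_mul,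
        intervalIntegral.integral_comp_mul_sub F₂ (two_ne_zero) 1]
      rw [e20, e21] at E₂
      rw [show (2:ℝ)*(1/2)-1 = 0 by norm_num, show (2:ℝ)*1-1 = 1 by norm_num]
      rw [smul_eq_mul]
      nlinarith [E₂]
    have hend1 : σc 1 = σ₂ 1 := by
      rw [hσc_gt 1 (by norm_num), show (2:ℝ)*1-1 = 1 by norm_num]
    have hend0 : σc 0 = σ₁ 0 := by
      rw [hσc_le 0 (by norm_num), show (2:ℝ)*0 = 0 by norm_num]
    show dotl2 (φ 1) (σc 1) - dotl2 (φ 0) (σc 0) - ∫ t in (0:ℝ)..1, Gf t = 0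
    rw [hend1, hend0, hsplit, hpc1, hpc2, hv1, hv2, hmid]
    ring
  · rw [hσc_le 0 (by norm_num), show (2:ℝ)*0 = 0 by norm_num, ha₁]
  · rw [hσc_gt 1 (by norm_num), show (2:ℝ)*1-1 = 1 by norm_num, hb₂]
  · rw [hmc_le 0 (by norm_num), show (2:ℝ)*0 = 0 by norm_num]
    funext a b; simp [hz₁]
  · rw [hmc_gt 1 (by norm_num), show (2:ℝ)*1-1 = 1 by norm_num]
    funext a b; simp [ho₂]
  · intro t ht
    have h4 : (4:ENNReal) = ENNReal.ofReal (4:ℝ) := by norm_num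
    by_cases h : t ≤ 1/2
    · rw [hσc_le t h, hmc_le t h]
      calc (∑ a, ∑ b, if ω a b ≠ 0 then
            Fq (g (σ₁ (2*t) a) (σ₁ (2*t) b)) (2 * m₁ (2*t) a b) else 0)
          ≤ ∑ a, ∑ b, (if ω a b ≠ 0 then
            4 * Fq (g (σ₁ (2*t) a) (σ₁ (2*t) b)) (m₁ (2*t) a b) else 0) := by
            refine Finset.sum_le_sum fun a _ => Finset.sum_le_sum fun b _ => ?_
            split_ifs
            · exact Fq_two _ _
            · exact le_rfl
        _ = 4 * ∑ a, ∑ b, (if ω a b ≠ 0 then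
            Fq (g (σ₁ (2*t) a) (σ₁ (2*t) b)) (m₁ (2*t) a b) else 0) := by
            simp_rw [Finset.mul_sum, mul_ite, mul_zero]
        _ ≤ 4 * ENNReal.ofReal C₁ :=
            mul_le_mul_right (hbd₁ (2*t) ⟨by linarith [ht.1], by linarith⟩) 4
        _ ≤ ENNReal.ofReal (4 * max C₁ C₂) := by
            rw [ENNReal.ofReal_mul (by norm_num), ← h4]
            exact mul_le_mul_right (ENNReal.ofReal_le_ofReal (le_max_left _ _)) 4
    · push_neg at h
      rw [hσc_gt t (not_le.mpr h), hmc_gt t (not_le.mpr h)]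
      calc (∑ a, ∑ b, if ω a b ≠ 0 then
            Fq (g (σ₂ (2*t-1) a) (σ₂ (2*t-1) b)) (2 * m₂ (2*t-1) a b) else 0)
          ≤ ∑ a, ∑ b, (if ω a b ≠ 0 then
            4 * Fq (g (σ₂ (2*t-1) a) (σ₂ (2*t-1) b)) (m₂ (2*t-1) a b) else 0) := by
            refine Finset.sum_le_sum fun a _ => Finset.sum_le_sum fun b _ => ?_
            split_ifs
            · exact Fq_two _ _
            · exact le_rfl
        _ = 4 * ∑ a, ∑ b, (if ω a b ≠ 0 then
            Fq (g (σ₂ (2*t-1) a) (σ₂ (2*t-1) b)) (m₂ (2*t-1) a b) else 0) := by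
            simp_rw [Finset.mul_sum, mul_ite, mul_zero]
        _ ≤ 4 * ENNReal.ofReal C₂ :=
            mul_le_mul_right (hbd₂ (2*t-1) ⟨by linarith, by linarith [ht.2]⟩) 4
        _ ≤ ENNReal.ofReal (4 * max C₁ C₂) := by
            rw [ENNReal.ofReal_mul (by norm_num), ← h4]
            exact mul_le_mul_right (ENNReal.ofReal_le_ofReal (le_max_right _ _)) 4

lemma ChainP.isProb_right {n : ℕ} {ω : Fin n → Fin n → ℝ} {g : ℝ → ℝ → ℝ}
    {ρ ρ' : Fin n → ℝ} (h : ChainP ω g ρ ρ') : IsProb ρ' := by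
  obtain ⟨σ, m, C, hσ, hm, hprob, hce, h0, h1, _⟩ := h
  exact h1 ▸ hprob 1 ⟨by norm_num, le_rfl⟩

lemma chain_path {n : ℕ} (ω : Fin n → Fin n → ℝ) (g : ℝ → ℝ → ℝ)
    (hωsym : ∀ i j, ω i j = ω j i) (hωnonneg : ∀ i j, 0 ≤ ω i j)
    (hgsym : ∀ s t, g s t = g t s)
    (hgbd : ∀ s t : ℝ, 0 ≤ s → 0 ≤ t → min s t ≤ g s t ∧ g s t ≤ max s t)
    {v w : Fin n} (hpath : Relation.ReflTransGen (fun a b => ω a b ≠ 0) v w) :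
    ∀ ρ : Fin n → ℝ, IsProb ρ → ∀ δ : ℝ, 0 ≤ δ → δ ≤ ρ v →
    ChainP ω g ρ (fun u => ρ u + δ * ((if u = w then 1 else 0) - (if u = v then 1 else 0))) := by
  induction hpath using Relation.ReflTransGen.head_induction_on with
  | refl =>
    intro ρ hρ δ hδ0 hδρ
    have heq : (fun u => ρ u + δ * ((if u = w then 1 else 0) - (if u = w then 1 else 0))) = ρ := by
      funext u; ring
    rw [heq]
    exact chain_refl ω g hρ
  | head hac hcw ih =>
    rename_i a c
    intro ρ hρ δ hδ0 hδρ
    by_cases haceq : a = c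
    · have := ih ρ hρ δ hδ0 (by rw [← haceq]; exact hδρ)
      rw [haceq]
      exact this
    · have step := chain_edge ω g hωsym hωnonneg hgsym hgbd haceq hac hδ0 hρ hδρ
      have hρ₁ := step.isProb_right
      have hδρ₁ : δ ≤ (fun u => ρ u + δ * ((if u = c then 1 else 0) - (if u = a then 1 else 0))) c := by
        show δ ≤ ρ c + δ * ((if c = c then 1 else 0) - (if c = a then 1 else 0))
        rw [if_pos rfl, if_neg (fun h => haceq h.symm)]
        have := hρ.1 c
        linarith
      have h2 := ih _ hρ₁ δ hδ0 hδρ₁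
      have h3 := chain_trans step h2
      have heq : (fun u => (fun u => ρ u + δ * ((if u = c then 1 else 0) - (if u = a then 1 else 0))) u
          + δ * ((if u = w then 1 else 0) - (if u = c then 1 else 0)))
          = (fun u => ρ u + δ * ((if u = w then 1 else 0) - (if u = a then 1 else 0))) := by
        funext u; simp only; ring
      rw [heq] at h3
      exact h3

lemma chain_to_dirac {n : ℕ} (ω : Fin n → Fin n → ℝ) (g : ℝ → ℝ → ℝ)
    (hωsym : ∀ i j, ω i j = ω j i) (hωnonneg : ∀ i j, 0 ≤ ω i j)
    (hconn : ∀ i j : Fin n, Relation.ReflTransGen (fun a b => ω a b ≠ 0) i j)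
    (hgsym : ∀ s t, g s t = g t s)
    (hgbd : ∀ s t : ℝ, 0 ≤ s → 0 ≤ t → min s t ≤ g s t ∧ g s t ≤ max s t)
    (i₀ : Fin n) (s : Finset (Fin n)) :
    i₀ ∉ s → ∀ ρ : Fin n → ℝ, IsProb ρ → (∀ u, u ≠ i₀ → u ∉ s → ρ u = 0) →
    ChainP ω g ρ (fun u => if u = i₀ then 1 else 0) := by
  induction s using Finset.induction_on with
  | empty =>
    intro _ ρ hρ hzero
    have heq : ρ = (fun u => if u = i₀ then (1:ℝ) else 0) := by
      funext u
      by_cases hu : u = i₀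
      · subst hu
        rw [if_pos rfl]
        have hsum : ∑ x, ρ x = ρ u := by
          apply Finset.sum_eq_single_of_mem u (Finset.mem_univ u)
          intro b _ hb
          exact hzero b hb (Finset.notMem_empty b)
        rw [← hsum, hρ.2]
      · rw [if_neg hu]
        exact hzero u hu (Finset.notMem_empty u)
    rw [← heq]
    exact chain_refl ω g hρ
  | @insert v s hv ih =>
    intro hins ρ hρ hzero
    have hvi₀ : v ≠ i₀ := fun h => hins (h ▸ Finset.mem_insert_self v s)
    have hi₀s : i₀ ∉ s := fun h => hins (Finset.mem_insert_of_mem h)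
    have step := chain_path ω g hωsym hωnonneg hgsym hgbd (hconn v i₀) ρ hρ (ρ v)
      (hρ.1 v) le_rfl
    have h2 := ih hi₀s _ step.isProb_right ?_
    · exact chain_trans step h2
    · intro u hu hus
      show ρ u + ρ v * ((if u = i₀ then 1 else 0) - (if u = v then 1 else 0)) = 0
      by_cases huv : u = v
      · subst huv
        rw [if_neg hu, if_pos rfl]
        ring
      · rw [if_neg huv]
        have hρu : ρ u = 0 := hzero u hu (fun h => (Finset.mem_insert.mp h).elim huv hus)
        rw [if_neg hu, hρu]
        ring

/-- existence of finite-action curves between arbitrary probability vectors,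
hence finiteness of the graph Wasserstein distance. -/
theorem stmt6 {n : ℕ} (ω : Fin n → Fin n → ℝ) (g : ℝ → ℝ → ℝ)
    (hωsym : ∀ i j, ω i j = ω j i) (hωnonneg : ∀ i j, 0 ≤ ω i j)
    (hconn : ∀ i j : Fin n, Relation.ReflTransGen (fun a b => ω a b ≠ 0) i j)
    (hgsym : ∀ s t, g s t = g t s)
    (hgcont : Continuous fun p : ℝ × ℝ => g p.1 p.2)
    (hgconc : ∀ a b : ℝ × ℝ, ∀ lam ∈ Set.Icc (0:ℝ) 1,
      (1 - lam) * g a.1 a.2 + lam * g b.1 b.2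
        ≤ g ((1 - lam) * a.1 + lam * b.1) ((1 - lam) * a.2 + lam * b.2))
    (hgbd : ∀ s t : ℝ, 0 ≤ s → 0 ≤ t → min s t ≤ g s t ∧ g s t ≤ max s t)
    (hgint : ∫⁻ r in Set.Icc (0:ℝ) 1, ENNReal.ofReal (1 / Real.sqrt (g r (1 - r))) < ⊤)
    (ρ0 ρ1 : Fin n → ℝ) (hρ0 : IsProb ρ0) (hρ1 : IsProb ρ1) :
    (∃ (σ : ℝ → Fin n → ℝ) (m : ℝ → Fin n → Fin n → ℝ),
      Continuous σ ∧ (∀ t ∈ Set.Icc (0:ℝ) 1, IsProb (σ t)) ∧ ContEqM ω σ m ∧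
      σ 0 = ρ0 ∧ σ 1 = ρ1 ∧ mAction ω g σ m < ⊤) ∧
    W2sq ω g ρ0 ρ1 < ⊤ := by
  have hn : 0 < n := by
    rcases Nat.eq_zero_or_pos n with h | h
    · subst h; simpa using hρ0.2
    · exact h
  set i₀ : Fin n := ⟨0, hn⟩
  have hvac : ∀ ρ : Fin n → ℝ, ∀ u : Fin n, u ≠ i₀ → u ∉ Finset.univ.erase i₀ → ρ u = 0 :=
    fun ρ u hu hmem => absurd (Finset.mem_erase.mpr ⟨hu, Finset.mem_univ u⟩) hmem
  have c0 := chain_to_dirac ω g hωsym hωnonneg hconn hgsym hgbd i₀ (Finset.univ.erase i₀)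
    (Finset.notMem_erase i₀ _) ρ0 hρ0 (hvac ρ0)
  have c1 := chain_to_dirac ω g hωsym hωnonneg hconn hgsym hgbd i₀ (Finset.univ.erase i₀)
    (Finset.notMem_erase i₀ _) ρ1 hρ1 (hvac ρ1)
  obtain ⟨σ, m, C, hσ, hm, hprob, hce, h0, h1, hmz0, hmz1, hbd⟩ := chain_trans c0 (chain_symm c1)
  have hfin : mAction ω g σ m < ⊤ := by
    have hle : mAction ω g σ m ≤ ENNReal.ofReal C * volume (Set.Icc (0:ℝ) 1) := by
      unfold mAction
      rw [← MeasureTheory.setLIntegral_const]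
      exact lintegral_mono_ae ((ae_restrict_iff' measurableSet_Icc).mpr (ae_of_all _ hbd))
    refine lt_of_le_of_lt hle ?_
    rw [Real.volume_Icc]
    exact ENNReal.mul_lt_top ENNReal.ofReal_lt_top ENNReal.ofReal_lt_top
  refine ⟨⟨σ, m, hσ, hprob, hce, h0, h1, hfin⟩, ?_⟩
  have hW : W2sq ω g ρ0 ρ1 ≤ mAction ω g σ m :=
    iInf_le_of_le σ (iInf_le_of_le m (iInf_le_of_le hσ (iInf_le_of_le hprob
      (iInf_le_of_le hce (iInf_le_of_le h0 (iInf_le_of_le h1 le_rfl))))))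
  exact lt_of_le_of_lt hW hfin
end

section
/- Take the logarithmic mean metric tensor g(s,t) = (s−t)/(log s − log t) for s ≠ t with st ≠ 0, g(s,s) = s, g(s,t) = 0 if st = 0. Then for every μ ∈ P₀(G), div_μ(∇_G log μ) = Aμ, where A is the graph Laplacian matrix defined by A_{ij} = ω_{ij} for j ∈ N(i), A_{ii} = −Σ_{k∈N(i)} ω_{ik}, A_{ij} = 0 otherwise. -/
open Finset MeasureTheory

/-- The logarithmic mean: `g(s,t) = (s-t)/(log s - log t)` for `s ≠ t`, `st ≠ 0`;
`g(s,s) = s`; `g(s,t) = 0` if `st = 0`. -/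
noncomputable def logMean (s t : ℝ) : ℝ :=
  if s * t = 0 then 0 else if s = t then s else (s - t) / (Real.log s - Real.log t)


lemma logMean_key {s t : ℝ} (hs : 0 < s) (ht : 0 < t) :
    logMean s t * (Real.log t - Real.log s) = t - s := by
  unfold logMean
  rcases eq_or_ne s t with h | h
  · simp [h]
  · rw [if_neg (by positivity), if_neg h]
    have hlog : Real.log s ≠ Real.log t := fun hc =>
      h (Real.log_injOn_pos (Set.mem_Ioi.2 hs) (Set.mem_Ioi.2 ht) hc)
    rw [show Real.log t - Real.log s = -(Real.log s - Real.log t) by ring, mul_neg,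
      div_mul_cancel₀ _ (sub_ne_zero.mpr hlog)]
    ring

/-- with the logarithmic-mean tensor, `div_μ(∇_G log μ) = Aμ` on `P₀(G)`,
`A` being the graph Laplacian. -/
theorem stmt13 {n : ℕ} (ω : Fin n → Fin n → ℝ)
    (hωsym : ∀ i j, ω i j = ω j i) (hωnonneg : ∀ i j, 0 ≤ ω i j)
    (hdiag : ∀ i, ω i i = 0)
    (A : Matrix (Fin n) (Fin n) ℝ)
    (hA : ∀ i j, A i j = if i = j then -(∑ k, ω i k) else ω i j)
    (μ : Fin n → ℝ) (hμ : IsProb μ) (hμpos : ∀ i, 0 < μ i) :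
    gdiv ω logMean μ (gradG ω (fun i => Real.log (μ i))) = A.mulVec μ := by
  funext i
  simp only [gdiv, gradG, Matrix.mulVec, dotProduct]
  have key : ∀ j, Real.sqrt (ω i j) * logMean (μ i) (μ j) *
      (Real.sqrt (ω j i) * (Real.log (μ j) - Real.log (μ i))) = ω i j * (μ j - μ i) := by
    intro j
    have hsq : Real.sqrt (ω i j) * Real.sqrt (ω j i) = ω i j := by
      rw [← hωsym i j, Real.mul_self_sqrt (hωnonneg i j)]
    calc Real.sqrt (ω i j) * logMean (μ i) (μ j) *
        (Real.sqrt (ω j i) * (Real.log (μ j) - Real.log (μ i)))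
        = (Real.sqrt (ω i j) * Real.sqrt (ω j i)) *
          (logMean (μ i) (μ j) * (Real.log (μ j) - Real.log (μ i))) := by ring
      _ = ω i j * (μ j - μ i) := by
          rw [hsq, logMean_key (hμpos i) (hμpos j)]
  simp only [key, hA]
  have hrhs : ∀ x, (if i = x then -∑ k, ω i k else ω i x) * μ x =
      ω i x * μ x + (if i = x then (-∑ k, ω i k) * μ x else 0) := by
    intro x; split
    · next h => simp [← h, hdiag i]
    · ring
  have hlhs : ∀ x, ω i x * (μ x - μ i) = ω i x * μ x - ω i x * μ i := fun x => by ring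
  simp only [hrhs, hlhs]
  rw [Finset.sum_add_distrib, Finset.sum_ite_eq, Finset.sum_sub_distrib, ← Finset.sum_mul]
  simp only [Finset.mem_univ, if_pos]
  ring
end

section
/- With the logarithmic-mean metric tensor g, for every μ ∈ P(G) the initial value problem σ̇ = Aσ, σ(0) = μ admits the unique solution σ^μ(t) = e^{tA}μ, which stays in P(G) for all t ∈ [0,T], and on P₀(G) it satisfies σ̇^μ = div_{σ^μ}(∇_G log σ^μ). -/
open Finset MeasureTheory

lemma logMean_mul_log (s t : ℝ) (hs : 0 < s) (ht : 0 < t) :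
    logMean s t * (Real.log t - Real.log s) = t - s := by
  unfold logMean
  rcases eq_or_ne s t with h | h
  · subst h; simp
  · have hst : s * t ≠ 0 := by positivity
    have hlog : Real.log s ≠ Real.log t := fun hl => h (by
      have h2 := congrArg Real.exp hl
      rwa [Real.exp_log hs, Real.exp_log ht] at h2)
    have hd : Real.log s - Real.log t ≠ 0 := sub_ne_zero.mpr hlog
    rw [if_neg hst, if_neg h]
    field_simp
    ring

lemma pow_entry_nonneg {n : ℕ} {B : Matrix (Fin n) (Fin n) ℝ} (hB : ∀ i j, 0 ≤ B i j) :
    ∀ (k : ℕ) (i j : Fin n), 0 ≤ (B ^ k) i j := by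
  intro k
  induction k with
  | zero =>
    intro i j
    simp only [pow_zero, Matrix.one_apply]
    split <;> norm_num
  | succ k ih =>
    intro i j
    rw [pow_succ, Matrix.mul_apply]
    exact Finset.sum_nonneg fun l _ => mul_nonneg (ih i l) (hB l j)

/-- `σ^μ(t) = e^{tA}μ` is the unique solution of `σ̇ = Aσ`, `σ(0) = μ`;
it stays in `P(G)`, and on `P₀(G)` it solves `σ̇ = div_σ(∇_G log σ)`. -/
theorem stmt14 {n : ℕ} (ω : Fin n → Fin n → ℝ)
    (hωsym : ∀ i j, ω i j = ω j i) (hωnonneg : ∀ i j, 0 ≤ ω i j)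
    (hdiag : ∀ i, ω i i = 0)
    (hconn : ∀ i j : Fin n, Relation.ReflTransGen (fun a b => ω a b ≠ 0) i j)
    (A : Matrix (Fin n) (Fin n) ℝ)
    (hA : ∀ i j, A i j = if i = j then -(∑ k, ω i k) else ω i j)
    (T : ℝ) (hT : 0 < T)
    (μ : Fin n → ℝ) (hμ : IsProb μ)
    (σ : ℝ → Fin n → ℝ) (hσ : ∀ t, σ t = (NormedSpace.exp (t • A)).mulVec μ) :
    σ 0 = μ ∧
    (∀ t : ℝ, HasDerivAt σ (A.mulVec (σ t)) t) ∧
    (∀ t ∈ Set.Icc (0:ℝ) T, IsProb (σ t)) ∧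
    (∀ τ : ℝ → Fin n → ℝ,
      τ 0 = μ → (∀ t : ℝ, HasDerivAt τ (A.mulVec (τ t)) t) → ∀ t : ℝ, τ t = σ t) ∧
    (∀ t : ℝ, (∀ i, 0 < σ t i) →
      A.mulVec (σ t)
        = gdiv ω logMean (σ t) (gradG ω (fun i => Real.log (σ t i)))) := by
  classical
  letI : SeminormedRing (Matrix (Fin n) (Fin n) ℝ) := Matrix.linftyOpSemiNormedRing
  letI : NormedRing (Matrix (Fin n) (Fin n) ℝ) := Matrix.linftyOpNormedRing
  letI : NormedAlgebra ℝ (Matrix (Fin n) (Fin n) ℝ) := Matrix.linftyOpNormedAlgebra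
  letI : NormedAlgebra ℚ (Matrix (Fin n) (Fin n) ℝ) := NormedAlgebra.restrictScalars ℚ ℝ _
  -- basic calculus tools
  have mulVec_deriv : ∀ (f : ℝ → Matrix (Fin n) (Fin n) ℝ) (f' : Matrix (Fin n) (Fin n) ℝ)
      (t : ℝ) (v : Fin n → ℝ), HasDerivAt f f' t →
      HasDerivAt (fun u => (f u).mulVec v) (f'.mulVec v) t := by
    intro f f' t v hf
    let L : Matrix (Fin n) (Fin n) ℝ →ₗ[ℝ] (Fin n → ℝ) :=
      { toFun := fun M => M.mulVec v,
        map_add' := fun M N => Matrix.add_mulVec M N v,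
        map_smul' := fun c M => Matrix.smul_mulVec c M v }
    exact (L.toContinuousLinearMap.hasFDerivAt).comp_hasDerivAt t hf
  have entry_deriv : ∀ (f : ℝ → Matrix (Fin n) (Fin n) ℝ) (f' : Matrix (Fin n) (Fin n) ℝ)
      (t : ℝ) (i j : Fin n), HasDerivAt f f' t →
      HasDerivAt (fun u => f u i j) (f' i j) t := by
    intro f f' t i j hf
    let L : Matrix (Fin n) (Fin n) ℝ →ₗ[ℝ] ℝ :=
      { toFun := fun M => M i j,
        map_add' := fun _ _ => rfl,
        map_smul' := fun _ _ => rfl }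
    exact (L.toContinuousLinearMap.hasFDerivAt).comp_hasDerivAt t hf
  -- entrywise nonnegativity of exponentials of entrywise-nonnegative matrices
  have hexp_nonneg : ∀ (B : Matrix (Fin n) (Fin n) ℝ), (∀ i j, 0 ≤ B i j) →
      ∀ i j, 0 ≤ NormedSpace.exp B i j := by
    intro B hB i j
    let L : Matrix (Fin n) (Fin n) ℝ →ₗ[ℝ] ℝ :=
      { toFun := fun M => M i j,
        map_add' := fun _ _ => rfl,
        map_smul' := fun _ _ => rfl }
    have hs := NormedSpace.expSeries_summable' (𝕂 := ℝ) B
    have h2 := L.toContinuousLinearMap.map_tsum hs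
    have h3 : NormedSpace.exp B i j = ∑' k : ℕ, ((k.factorial : ℝ)⁻¹) * (B ^ k) i j := by
      rw [NormedSpace.exp_eq_tsum ℝ]
      exact h2
    rw [h3]
    exact tsum_nonneg fun k => mul_nonneg (by positivity) (pow_entry_nonneg hB k i j)
  -- σ 0 = μ
  have h0 : σ 0 = μ := by
    rw [hσ 0, zero_smul, NormedSpace.exp_zero, Matrix.one_mulVec]
  -- derivative
  have hσderiv : ∀ t : ℝ, HasDerivAt σ (A.mulVec (σ t)) t := by
    intro t
    have h1 : HasDerivAt (fun u : ℝ => NormedSpace.exp (u • A))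
        (A * NormedSpace.exp (t • A)) t := hasDerivAt_exp_smul_const' A t
    have h2 := mulVec_deriv _ _ t μ h1
    have hfun : σ = fun u => (NormedSpace.exp (u • A)).mulVec μ := funext hσ
    have h3 : HasDerivAt σ ((A * NormedSpace.exp (t • A)).mulVec μ) t := by
      rw [hfun]; exact h2
    have e : A.mulVec (σ t) = (A * NormedSpace.exp (t • A)).mulVec μ := by
      rw [hσ t, Matrix.mulVec_mulVec]
    rwa [← e] at h3
  -- nonnegativity of entries of exp (t • A) for t ≥ 0
  have hpos_entries : ∀ t : ℝ, 0 ≤ t → ∀ i j, 0 ≤ NormedSpace.exp (t • A) i j := by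
    intro t ht i j
    set c : ℝ := ∑ p, ∑ k, ω p k with hc
    have hcrow : ∀ p, (∑ k, ω p k) ≤ c := fun p =>
      Finset.single_le_sum (f := fun q => ∑ k, ω q k)
        (fun q _ => Finset.sum_nonneg fun k _ => hωnonneg q k) (Finset.mem_univ p)
    have hB : ∀ i j, 0 ≤ (t • A + (t * c) • (1 : Matrix (Fin n) (Fin n) ℝ)) i j := by
      intro i j
      rcases eq_or_ne i j with h | h
      · subst h
        have he : (t • A + (t * c) • (1 : Matrix (Fin n) (Fin n) ℝ)) i i
            = t * (-(∑ k, ω i k)) + t * c := by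
          simp [Matrix.add_apply, Matrix.smul_apply, Matrix.one_apply_eq, hA]
        rw [he, show t * (-(∑ k, ω i k)) + t * c = t * (c - ∑ k, ω i k) by ring]
        exact mul_nonneg ht (sub_nonneg.mpr (hcrow i))
      · simp only [Matrix.add_apply, Matrix.smul_apply, Matrix.one_apply_ne h, hA, if_neg h,
          smul_eq_mul, mul_zero, add_zero]
        exact mul_nonneg ht (hωnonneg i j)
    have hcomm : Commute (t • A + (t * c) • (1 : Matrix (Fin n) (Fin n) ℝ))
        (-((t * c) • (1 : Matrix (Fin n) (Fin n) ℝ))) :=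
      (((Commute.one_right _).smul_right (t * c)).neg_right)
    have hsplit : NormedSpace.exp (t • A)
        = NormedSpace.exp (t • A + (t * c) • (1 : Matrix (Fin n) (Fin n) ℝ)) *
          NormedSpace.exp (-((t * c) • (1 : Matrix (Fin n) (Fin n) ℝ))) := by
      erw [← NormedSpace.exp_add_of_commute hcomm]
      congr 1
      abel
    have hexp1 : NormedSpace.exp (-((t * c) • (1 : Matrix (Fin n) (Fin n) ℝ)))
        = Real.exp (-(t * c)) • (1 : Matrix (Fin n) (Fin n) ℝ) := by
      have h1 : -((t * c) • (1 : Matrix (Fin n) (Fin n) ℝ))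
          = algebraMap ℝ (Matrix (Fin n) (Fin n) ℝ) (-(t * c)) := by
        simp [Algebra.algebraMap_eq_smul_one, neg_smul]
      erw [h1, ← NormedSpace.algebraMap_exp_comm (𝔸 := Matrix (Fin n) (Fin n) ℝ), Algebra.algebraMap_eq_smul_one,
        Real.exp_eq_exp_ℝ]
    rw [hsplit, hexp1]
    have : (NormedSpace.exp (t • A + (t * c) • (1 : Matrix (Fin n) (Fin n) ℝ)) *
        (Real.exp (-(t * c)) • (1 : Matrix (Fin n) (Fin n) ℝ))) i j
        = Real.exp (-(t * c)) *
          NormedSpace.exp (t • A + (t * c) • (1 : Matrix (Fin n) (Fin n) ℝ)) i j := by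
      rw [Matrix.mul_smul, Matrix.mul_one, Matrix.smul_apply, smul_eq_mul]
    rw [this]
    exact mul_nonneg (Real.exp_pos _).le (hexp_nonneg _ hB i j)
  -- columns of A sum to zero
  have hcol : ∀ v : Fin n → ℝ, ∑ i, A.mulVec v i = 0 := by
    intro v
    simp only [Matrix.mulVec, dotProduct]
    rw [Finset.sum_comm]
    apply Finset.sum_eq_zero
    intro j _
    rw [← Finset.sum_mul]
    have hAj : ∑ i, A i j = 0 := by
      simp only [hA]
      rw [← Finset.add_sum_erase _ _ (Finset.mem_univ j), if_pos rfl]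
      have h1 : ∑ i ∈ Finset.univ.erase j, (if i = j then -(∑ k, ω i k) else ω i j)
          = ∑ i ∈ Finset.univ.erase j, ω i j :=
        Finset.sum_congr rfl fun i hi => if_neg (Finset.ne_of_mem_erase hi)
      have h2 : ∑ k, ω j k = ∑ i ∈ Finset.univ.erase j, ω i j := by
        have h3 : ∑ k, ω j k = ∑ k, ω k j := Finset.sum_congr rfl fun k _ => hωsym j k
        rw [h3, ← Finset.add_sum_erase _ (fun i => ω i j) (Finset.mem_univ j), hdiag j, zero_add]
      rw [h1, ← h2]
      ring
    rw [hAj, zero_mul]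
  -- the total mass is conserved
  have hsum : ∀ t : ℝ, ∑ i, σ t i = 1 := by
    have hs : ∀ t : ℝ, HasDerivAt (fun u => ∑ i, σ u i) 0 t := by
      intro t
      have hcoord : ∀ i : Fin n, HasDerivAt (fun u => σ u i) (A.mulVec (σ t) i) t := by
        intro i
        exact ((ContinuousLinearMap.proj (R := ℝ) (φ := fun _ : Fin n => ℝ)
          i).hasFDerivAt).comp_hasDerivAt t (hσderiv t)
      have h := HasDerivAt.fun_sum (fun i (_ : i ∈ Finset.univ) => hcoord i)
      rwa [hcol (σ t)] at h
    intro t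
    have hconst : (fun u => ∑ i, σ u i) t = (fun u => ∑ i, σ u i) 0 :=
      is_const_of_deriv_eq_zero (fun x => (hs x).differentiableAt)
        (fun x => (hs x).deriv) t 0
    simp only at hconst
    rw [hconst, h0]
    exact hμ.2
  refine ⟨h0, hσderiv, ?_, ?_, ?_⟩
  · -- stays in P(G)
    intro t ht
    refine ⟨?_, hsum t⟩
    intro i
    rw [hσ t]
    simp only [Matrix.mulVec, dotProduct]
    exact Finset.sum_nonneg fun j _ =>
      mul_nonneg (hpos_entries t ht.1 i j) (hμ.1 j)
  · -- uniqueness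
    intro τ hτ0 hτ t
    set E : ℝ → Matrix (Fin n) (Fin n) ℝ := fun u => NormedSpace.exp (u • (-A)) with hE
    have hEderiv : ∀ u, HasDerivAt E ((-A) * E u) u := fun u =>
      hasDerivAt_exp_smul_const' (-A) u
    have hcommAE : ∀ u, A * E u = E u * A := by
      intro u
      have hcA : Commute A (u • (-A)) := ((Commute.refl A).neg_right).smul_right u
      exact (hcA.exp_right).eq
    have key : ∀ (i : Fin n) (u : ℝ),
        HasDerivAt (fun w => ((E w).mulVec (τ w)) i) 0 u := by
      intro i u
      have hterm : ∀ j : Fin n, HasDerivAt (fun w => E w i j * τ w j)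
          (((-A) * E u) i j * τ u j + E u i j * (A.mulVec (τ u)) j) u := by
        intro j
        exact (entry_deriv E ((-A) * E u) u i j (hEderiv u)).mul
          (((ContinuousLinearMap.proj (R := ℝ) (φ := fun _ : Fin n => ℝ)
            j).hasFDerivAt).comp_hasDerivAt u (hτ u))
      have hsum2 := HasDerivAt.fun_sum (fun j (_ : j ∈ Finset.univ) => hterm j)
      have heq : (∑ j, (((-A) * E u) i j * τ u j + E u i j * (A.mulVec (τ u)) j)) = 0 := by
        rw [Finset.sum_add_distrib]
        have e1 : ∑ j, ((-A) * E u) i j * τ u j = (((-A) * E u).mulVec (τ u)) i := rfl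
        have e2 : ∑ j, E u i j * (A.mulVec (τ u)) j = ((E u * A).mulVec (τ u)) i := by
          rw [← Matrix.mulVec_mulVec]
          rfl
        rw [e1, e2, ← hcommAE u, neg_mul, Matrix.neg_mulVec]
        simp
      rw [heq] at hsum2
      have hfun : (fun w => ((E w).mulVec (τ w)) i) = fun w => ∑ j, E w i j * τ w j := by
        funext w
        simp [Matrix.mulVec, dotProduct]
      rw [hfun]
      exact hsum2
    have hconst : ∀ i, ((E t).mulVec (τ t)) i = μ i := by
      intro i
      have h := is_const_of_deriv_eq_zero (f := fun w => ((E w).mulVec (τ w)) i)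
        (fun x => (key i x).differentiableAt) (fun x => (key i x).deriv) t 0
      rw [h]
      simp [hE, NormedSpace.exp_zero, Matrix.one_mulVec, hτ0]
    have hEτ : (E t).mulVec (τ t) = μ := funext hconst
    have hinv : NormedSpace.exp (t • A) * E t = 1 := by
      rw [hE]
      beta_reduce
      erw [← NormedSpace.exp_add_of_commute (((Commute.refl A).neg_right).smul_right t |>.smul_left t)]
      rw [smul_neg]
      simp [NormedSpace.exp_zero]
    calc τ t = (1 : Matrix (Fin n) (Fin n) ℝ).mulVec (τ t) := (Matrix.one_mulVec _).symm
      _ = (NormedSpace.exp (t • A) * E t).mulVec (τ t) := by rw [hinv]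
      _ = (NormedSpace.exp (t • A)).mulVec ((E t).mulVec (τ t)) := by
          rw [Matrix.mulVec_mulVec]
      _ = σ t := by rw [hEτ, hσ t]
  · -- the identity on P₀(G)
    intro t hpos
    set ρ : Fin n → ℝ := σ t with hρ
    funext i
    have hterm : ∀ j, Real.sqrt (ω i j) * logMean (ρ i) (ρ j) *
        (Real.sqrt (ω j i) * (Real.log (ρ j) - Real.log (ρ i))) = ω i j * (ρ j - ρ i) := by
      intro j
      rw [hωsym j i]
      have hsq : Real.sqrt (ω i j) * Real.sqrt (ω i j) = ω i j :=
        Real.mul_self_sqrt (hωnonneg i j)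
      have h1 : Real.sqrt (ω i j) * logMean (ρ i) (ρ j) *
          (Real.sqrt (ω i j) * (Real.log (ρ j) - Real.log (ρ i)))
          = (Real.sqrt (ω i j) * Real.sqrt (ω i j)) *
            (logMean (ρ i) (ρ j) * (Real.log (ρ j) - Real.log (ρ i))) := by ring
      rw [h1, hsq, logMean_mul_log _ _ (hpos i) (hpos j)]
    show A.mulVec ρ i = _
    simp only [gdiv, gradG]
    rw [Finset.sum_congr rfl (fun j _ => hterm j)]
    have lhs_eq : A.mulVec ρ i = (∑ j, ω i j * ρ j) - (∑ k, ω i k) * ρ i := by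
      simp only [Matrix.mulVec, dotProduct, hA]
      rw [← Finset.sum_erase_add _ _ (Finset.mem_univ i)]
      have e1 : ∑ j ∈ Finset.univ.erase i, (if i = j then -(∑ k, ω i k) else ω i j) * ρ j
          = ∑ j ∈ Finset.univ.erase i, ω i j * ρ j :=
        Finset.sum_congr rfl fun j hj => by
          rw [if_neg (Ne.symm (Finset.ne_of_mem_erase hj))]
      have e2 : ∑ j ∈ Finset.univ.erase i, ω i j * ρ j = ∑ j, ω i j * ρ j := by
        rw [← Finset.sum_erase_add _ (fun j => ω i j * ρ j) (Finset.mem_univ i), hdiag i]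
        ring
      rw [e1, e2, if_pos rfl]
      ring
    have rhs_eq : ∑ j, ω i j * (ρ j - ρ i) = (∑ j, ω i j * ρ j) - (∑ k, ω i k) * ρ i := by
      rw [Finset.sum_mul, ← Finset.sum_sub_distrib]
      exact Finset.sum_congr rfl fun j _ => by ring
    rw [lhs_eq, rhs_eq]
end
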